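/- (Fixed points of EM are stationary points of the observed-data log-likelihood.) Suppose θ* ∈ Θ is such that the map θ' ↦ Q(θ'|θ*) is differentiable at θ* with ∇_{θ'} Q(θ'|θ*)|_{θ'=θ*} = 0 — in particular this holds if θ* is an interior maximizer of Q(·|θ*), i.e., a fixed point of the EM update. Then θ* is a critical point of the observed-data log-likelihood: ∇ℓ(θ*) = 0. -/

import Mathlib

open MeasureTheory Real Filter

/-- Gradient of `log ∘ g` via chain rule. -/
lemma gradient_log_comp {p : ℕ} {g : EuclideanSpace ℝ (Fin p) → ℝ}
    {x : EuclideanSpace ℝ (Fin p)} (hg : DifferentiableAt ℝ g x) (hne : g x ≠ 0) :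
    gradient (fun s => Real.log (g s)) x = (g x)⁻¹ • gradient g x := by
  have h1 : HasFDerivAt (fun s => Real.log (g s)) ((g x)⁻¹ • fderiv ℝ g x) x :=
    (Real.hasDerivAt_log hne).comp_hasFDerivAt x hg.hasFDerivAt
  rw [h1.hasGradientAt.gradient]
  simp [gradient, _root_.map_smul]

/-- Fixed points of EM are stationary points of the observed-data log-likelihood:
if θ* satisfies ∇_{θ'} Q(θ'|θ*)|_{θ'=θ*} = 0 (as holds at an interior maximizer of
Q(·|θ*), i.e., at a fixed point of the EM update), then ∇ℓ(θ*) = 0. -/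
theorem em_fixed_point_is_stationary {p : ℕ}
    {𝒳 : Type*} [MeasurableSpace 𝒳] (μ : Measure 𝒳) [SigmaFinite μ]
    (Θ : Set (EuclideanSpace ℝ (Fin p))) (hΘ : IsOpen Θ)
    (f_c : EuclideanSpace ℝ (Fin p) → 𝒳 → ℝ)
    (hpos : ∀ θ x, 0 < f_c θ x)
    (hmeas : ∀ θ, Measurable (f_c θ))
    (hint : ∀ θ ∈ Θ, Integrable (f_c θ) μ)
    (hsmooth : ∀ᵐ x ∂μ, ContDiffOn ℝ 1 (fun t => f_c t x) Θ)
    (L : EuclideanSpace ℝ (Fin p) → ℝ) (hL : ∀ θ, L θ = ∫ x, f_c θ x ∂μ)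
    (hLpos : ∀ θ ∈ Θ, 0 < L θ)
    (ell : EuclideanSpace ℝ (Fin p) → ℝ) (hell : ∀ θ, ell θ = Real.log (L θ))
    (f_m : EuclideanSpace ℝ (Fin p) → 𝒳 → ℝ)
    (hfm : ∀ θ x, f_m θ x = f_c θ x / L θ)
    (Q : EuclideanSpace ℝ (Fin p) → EuclideanSpace ℝ (Fin p) → ℝ)
    (hQ : ∀ θ' θ, Q θ' θ = ∫ x, Real.log (f_c θ' x) * f_m θ x ∂μ)
    (hDUIL : ∀ θ ∈ Θ, gradient L θ = ∫ x, gradient (fun t => f_c t x) θ ∂μ)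
    (hintL : ∀ θ ∈ Θ, Integrable (fun x => gradient (fun t => f_c t x) θ) μ)
    (θs : EuclideanSpace ℝ (Fin p)) (hθs : θs ∈ Θ)
    (hDUIQ : ∀ t ∈ Θ, gradient (fun s => Q s θs) t =
      ∫ x, f_m θs x • gradient (fun s => Real.log (f_c s x)) t ∂μ)
    (hintQ : ∀ t ∈ Θ, Integrable
      (fun x => f_m θs x • gradient (fun s => Real.log (f_c s x)) t) μ)
    (hdiffQ : DifferentiableAt ℝ (fun s => Q s θs) θs)
    (hcrit : gradient (fun s => Q s θs) θs = 0) :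
    gradient ell θs = 0 := by
  have hLs : 0 < L θs := hLpos θs hθs
  -- Step 1: rewrite the integrand a.e.
  have hae : ∀ᵐ x ∂μ,
      f_m θs x • gradient (fun s => Real.log (f_c s x)) θs
        = (L θs)⁻¹ • gradient (fun t => f_c t x) θs := by
    filter_upwards [hsmooth] with x hx
    have hdiff : DifferentiableAt ℝ (fun t => f_c t x) θs :=
      ((hx.differentiableOn one_ne_zero).differentiableAt (hΘ.mem_nhds hθs))
    rw [gradient_log_comp hdiff (hpos θs x).ne', hfm, smul_smul]
    congr 1
    field_simp
    rw [div_self (hpos θs x).ne']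
  -- Step 2: gradient L θs = 0
  have hgradL : gradient L θs = 0 := by
    have h0 : (0 : EuclideanSpace ℝ (Fin p))
        = (L θs)⁻¹ • ∫ x, gradient (fun t => f_c t x) θs ∂μ := by
      rw [← integral_smul, ← integral_congr_ae hae, ← hDUIQ θs hθs, hcrit]
    rw [hDUIL θs hθs]
    have := h0.symm
    rcases smul_eq_zero.mp this with h | h
    · exact absurd h (by positivity)
    · exact h
  -- Step 3: conclude for ell
  by_cases hdL : DifferentiableAt ℝ L θs
  · have hfd : fderiv ℝ L θs = 0 := by
      have : gradient L θs = (InnerProductSpace.toDual ℝ _).symm (fderiv ℝ L θs) := rfl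
      rw [this] at hgradL
      exact (InnerProductSpace.toDual ℝ _).symm.injective (by simpa using hgradL)
    have h1 : HasFDerivAt (fun s => Real.log (L s)) ((L θs)⁻¹ • fderiv ℝ L θs) θs :=
      (Real.hasDerivAt_log hLs.ne').comp_hasFDerivAt θs hdL.hasFDerivAt
    have h2 : HasFDerivAt ell (0 : EuclideanSpace ℝ (Fin p) →L[ℝ] ℝ) θs := by
      rw [hfd, smul_zero] at h1
      have : ell = fun s => Real.log (L s) := funext hell
      rw [this]
      exact h1
    rw [h2.hasGradientAt.gradient]
    simp [gradient]
  · -- If L is not differentiable at θs, neither is ell, so its gradient is 0.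
    apply gradient_eq_zero_of_not_differentiableAt
    intro hdell
    apply hdL
    have hexp : DifferentiableAt ℝ (fun s => Real.exp (ell s)) θs :=
      (Real.differentiable_exp _).comp θs hdell
    apply hexp.congr_of_eventuallyEq
    filter_upwards [hΘ.mem_nhds hθs] with t ht
    rw [hell, Real.exp_log (hLpos t ht)]
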